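/- Let N ≥ 1, let s ∈ (1, ∞) and let t satisfy 1 ≤ t ≤ s. Let (μ_n) be a sequence of measurable functions on ℝ^N that is bounded in L^s(ℝ^N) (i.e., sup_n ∫_{ℝ^N} |μ_n|^s dx < ∞) and converges almost everywhere to a function μ. Then lim_{n→∞} ∫_{ℝ^N} | |μ_n|^{t−1}μ_n − |μ_n − μ|^{t−1}(μ_n − μ) − |μ|^{t−1}μ |^{s/t} dx = 0. -/

import Mathlib

open MeasureTheory Filter Topology
open scoped NNReal ENNReal

section BLaux

noncomputable def BLphi (t : ℝ) (y : ℝ) : ℝ := |y| ^ (t - 1) * y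

lemma BL_continuous_abs_rpow (p : ℝ) (hp : 0 ≤ p) : Continuous fun y : ℝ => |y| ^ p := by
  rw [continuous_iff_continuousAt]
  intro y
  exact (Real.continuousAt_rpow_const _ p (Or.inr hp)).comp continuous_abs.continuousAt

lemma BL_rpow_sub_one_mul (t c : ℝ) (ht : t ≠ 0) (hc : 0 ≤ c) :
    c ^ (t - 1) * c = c ^ t := by
  have h := Real.rpow_add' hc (show t - 1 + 1 ≠ 0 by simpa using ht)
  rw [Real.rpow_one] at h
  rw [← h]
  norm_num

lemma BL_hasDerivAt_phi (t : ℝ) (ht : 1 < t) (x : ℝ) :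
    HasDerivAt (BLphi t) (t * |x| ^ (t - 1)) x := by
  rcases lt_trichotomy x 0 with hx | hx | hx
  · -- x < 0
    have hnx : (0:ℝ) < -x := by linarith
    have h1 : HasDerivAt (fun y : ℝ => (-y) ^ (t - 1)) (-1 * (t - 1) * (-x) ^ (t - 1 - 1)) x :=
      (hasDerivAt_neg x).rpow_const (Or.inl (by simpa using hnx.ne'))
    have h2 := h1.mul (hasDerivAt_id x)
    simp only [id_eq] at h2
    have hdeq : -1 * (t - 1) * (-x) ^ (t - 1 - 1) * x + (-x) ^ (t - 1) * 1
        = t * |x| ^ (t - 1) := by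
      have e1 : (-x) ^ (t - 1 - 1) * (-x) = (-x) ^ (t - 1) := by
        have := Real.rpow_add_one hnx.ne' (t - 1 - 1)
        rw [← this]
        norm_num
      rw [abs_of_neg hx]
      nlinarith [e1]
    rw [hdeq] at h2
    refine h2.congr_of_eventuallyEq ?_
    filter_upwards [IsOpen.mem_nhds isOpen_Iio (show x ∈ Set.Iio (0:ℝ) from hx)] with y hy
    have : y < 0 := hy
    simp [BLphi, abs_of_neg this]
  · -- x = 0
    subst hx
    have hd : t * |(0:ℝ)| ^ (t - 1) = 0 := by
      rw [abs_zero, Real.zero_rpow (by linarith : t - 1 ≠ 0), mul_zero]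
    rw [hd, hasDerivAt_iff_tendsto_slope]
    have h1 : Tendsto (fun y : ℝ => |y| ^ (t - 1)) (𝓝[≠] (0:ℝ)) (𝓝 0) := by
      have hc := (BL_continuous_abs_rpow (t - 1) (by linarith)).tendsto 0
      rw [abs_zero, Real.zero_rpow (by linarith : t - 1 ≠ 0)] at hc
      exact hc.mono_left nhdsWithin_le_nhds
    refine h1.congr' ?_
    filter_upwards [self_mem_nhdsWithin] with y hy
    have hy0 : y ≠ 0 := hy
    simp only [slope_def_field, BLphi]
    rw [abs_zero, Real.zero_rpow (by linarith : t - 1 ≠ 0)]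
    field_simp
    ring
  · -- 0 < x
    have h1 : HasDerivAt (fun y : ℝ => y ^ t) (t * x ^ (t - 1)) x :=
      Real.hasDerivAt_rpow_const (Or.inl hx.ne')
    have h2 : t * x ^ (t - 1) = t * |x| ^ (t - 1) := by rw [abs_of_pos hx]
    rw [h2] at h1
    refine h1.congr_of_eventuallyEq ?_
    filter_upwards [IsOpen.mem_nhds isOpen_Ioi (show x ∈ Set.Ioi (0:ℝ) from hx)] with y hy
    have hy0 : (0:ℝ) < y := hy
    simp only [BLphi, abs_of_pos hy0]
    exact BL_rpow_sub_one_mul t y (by linarith) hy0.le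

lemma BL_continuous_phi (t : ℝ) (ht : 1 < t) : Continuous (BLphi t) := by
  rw [continuous_iff_continuousAt]
  exact fun x => (BL_hasDerivAt_phi t ht x).continuousAt

lemma BL_phi_zero (t : ℝ) : BLphi t 0 = 0 := by simp [BLphi]

lemma BL_rpow_add_le (p x y : ℝ) (hp : 0 ≤ p) (hx : 0 ≤ x) (hy : 0 ≤ y) :
    (x + y) ^ p ≤ 2 ^ p * (x ^ p + y ^ p) := by
  have hm : 0 ≤ max x y := le_max_of_le_left hx
  have h1 : x + y ≤ 2 * max x y := by
    rcases le_total x y with h | h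
    · rw [max_eq_right h]; linarith
    · rw [max_eq_left h]; linarith
  calc (x + y) ^ p ≤ (2 * max x y) ^ p :=
        Real.rpow_le_rpow (by linarith) h1 hp
    _ = 2 ^ p * (max x y) ^ p := Real.mul_rpow (by norm_num) hm
    _ ≤ 2 ^ p * (x ^ p + y ^ p) := by
        apply mul_le_mul_of_nonneg_left _ (Real.rpow_nonneg (by norm_num) p)
        rcases max_choice x y with h | h <;> rw [h]
        · exact le_add_of_nonneg_right (Real.rpow_nonneg hy p)
        · exact le_add_of_nonneg_left (Real.rpow_nonneg hx p)

lemma BL_young (t ε a b : ℝ) (ht : 1 < t) (hε : 0 < ε) (ha : 0 ≤ a) (hb : 0 ≤ b) :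
    a ^ (t - 1) * b ≤ ε * a ^ t + ε ^ (1 - t) * b ^ t := by
  have ht0 : t ≠ 0 := by linarith
  rcases le_or_gt b (ε * a) with h | h
  · have h1 : a ^ (t - 1) * b ≤ a ^ (t - 1) * (ε * a) :=
      mul_le_mul_of_nonneg_left h (Real.rpow_nonneg ha _)
    have h2 : a ^ (t - 1) * (ε * a) = ε * a ^ t := by
      rw [← BL_rpow_sub_one_mul t a ht0 ha]; ring
    have h3 : 0 ≤ ε ^ (1 - t) * b ^ t := by positivity
    linarith
  · have hab : a ≤ b / ε := by rw [le_div_iff₀ hε]; nlinarith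
    have h2 : a ^ (t - 1) ≤ (b / ε) ^ (t - 1) :=
      Real.rpow_le_rpow ha hab (by linarith)
    have h3 : (b / ε) ^ (t - 1) * b = ε ^ (1 - t) * b ^ t := by
      rw [Real.div_rpow hb hε.le, show (1:ℝ) - t = -(t - 1) by ring,
        Real.rpow_neg hε.le, ← BL_rpow_sub_one_mul t b ht0 hb]
      field_simp
    have h4 : a ^ (t - 1) * b ≤ (b / ε) ^ (t - 1) * b :=
      mul_le_mul_of_nonneg_right h2 hb
    have h5 : 0 ≤ ε * a ^ t := by positivity
    linarith [h3 ▸ h4]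

lemma BL_phi_lipschitz (t : ℝ) (ht : 1 < t) (a b : ℝ) :
    |BLphi t (a + b) - BLphi t a| ≤ t * (|a| + |b|) ^ (t - 1) * |b| := by
  set R := |a| + |b| with hR
  have hR0 : 0 ≤ R := by positivity
  have key := Convex.norm_image_sub_le_of_norm_hasDerivWithin_le
    (f := BLphi t) (f' := fun y => t * |y| ^ (t - 1)) (s := Set.Icc (-R) R)
    (C := t * R ^ (t - 1))
    (fun y _ => (BL_hasDerivAt_phi t ht y).hasDerivWithinAt)
    (fun y hy => by
      rw [Real.norm_eq_abs, abs_of_nonneg (by positivity)]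
      have hyR : |y| ≤ R := abs_le.2 ⟨hy.1, hy.2⟩
      exact mul_le_mul_of_nonneg_left
        (Real.rpow_le_rpow (abs_nonneg y) hyR (by linarith)) (by linarith))
    (convex_Icc _ _)
    (show a ∈ Set.Icc (-R) R from abs_le.1 (by rw [hR]; linarith [abs_nonneg b]))
    (show a + b ∈ Set.Icc (-R) R from abs_le.1 (by rw [hR]; exact abs_add_le a b))
  rw [Real.norm_eq_abs, Real.norm_eq_abs, add_sub_cancel_left] at key
  linarith [key]

lemma BL_key_ptwise (t ε : ℝ) (ht : 1 < t) (hε : 0 < ε) :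
    ∃ C : ℝ, 0 ≤ C ∧ ∀ a b : ℝ,
      |BLphi t (a + b) - BLphi t a - BLphi t b| ≤ ε * |a| ^ t + C * |b| ^ t := by
  have ht0 : (0:ℝ) < t := by linarith
  set K : ℝ := t * 2 ^ (t - 1) with hKdef
  have hK : 0 < K := by positivity
  refine ⟨K * (ε / K) ^ (1 - t) + K + 1, by positivity, fun a b => ?_⟩
  have habs : ∀ c : ℝ, |c| ^ (t - 1) * |c| = |c| ^ t := fun c =>
    BL_rpow_sub_one_mul t |c| (by linarith) (abs_nonneg c)
  have h1 : |BLphi t (a + b) - BLphi t a| ≤ K * (|a| ^ (t - 1) * |b|) + K * |b| ^ t := by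
    refine (BL_phi_lipschitz t ht a b).trans ?_
    have h2 := BL_rpow_add_le (t - 1) |a| |b| (by linarith) (abs_nonneg a) (abs_nonneg b)
    calc t * (|a| + |b|) ^ (t - 1) * |b|
        ≤ t * (2 ^ (t - 1) * (|a| ^ (t - 1) + |b| ^ (t - 1))) * |b| := by
          apply mul_le_mul_of_nonneg_right _ (abs_nonneg b)
          exact mul_le_mul_of_nonneg_left h2 ht0.le
      _ = K * (|a| ^ (t - 1) * |b|) + K * (|b| ^ (t - 1) * |b|) := by ring
      _ = K * (|a| ^ (t - 1) * |b|) + K * |b| ^ t := by rw [habs b]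
  have hphib : |BLphi t b| = |b| ^ t := by
    rw [BLphi, abs_mul, abs_of_nonneg (Real.rpow_nonneg (abs_nonneg b) _), habs b]
  have h3 := BL_young t (ε / K) |a| |b| ht (by positivity) (abs_nonneg a) (abs_nonneg b)
  have h4 : |BLphi t (a + b) - BLphi t a - BLphi t b|
      ≤ |BLphi t (a + b) - BLphi t a| + |BLphi t b| := abs_sub _ _
  have h5 : K * (|a| ^ (t - 1) * |b|) ≤ K * (ε / K * |a| ^ t + (ε / K) ^ (1 - t) * |b| ^ t) :=
    mul_le_mul_of_nonneg_left h3 hK.le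
  have h6 : K * (ε / K * |a| ^ t) = ε * |a| ^ t := by field_simp
  nlinarith [h4, h1, hphib, h5, h6]

end BLaux

/-- Local Brezis–Lieb lemma, second part: if `1 < s`, `1 ≤ t ≤ s`, `(μn)` is a sequence of
measurable functions on `ℝ^N` bounded in `L^s` that converges almost everywhere to `μ`, then
`∫ | |μn|^{t−1}μn − |μn − μ|^{t−1}(μn − μ) − |μ|^{t−1}μ |^{s/t} → 0`. -/
theorem stmt_2 (N : ℕ) (hN : 1 ≤ N) (s t : ℝ) (hs : 1 < s) (ht : 1 ≤ t) (hts : t ≤ s)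
    (μn : ℕ → EuclideanSpace ℝ (Fin N) → ℝ) (μ : EuclideanSpace ℝ (Fin N) → ℝ)
    (hmeas : ∀ n, Measurable (μn n)) (hμ : Measurable μ)
    (hbdd : ∃ M : ℝ≥0, ∀ n,
      ∫⁻ x, ENNReal.ofReal (|μn n x| ^ s) ∂volume ≤ M)
    (hae : ∀ᵐ x ∂(volume : Measure (EuclideanSpace ℝ (Fin N))),
      Tendsto (fun n => μn n x) atTop (𝓝 (μ x))) :
    Tendsto (fun n =>
        ∫ x, |(|μn n x| ^ (t - 1) * μn n x
              - |μn n x - μ x| ^ (t - 1) * (μn n x - μ x)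
              - |μ x| ^ (t - 1) * μ x)| ^ (s / t) ∂volume)
      atTop (𝓝 0) := by
  have hs0 : (0:ℝ) < s := by linarith
  rcases eq_or_lt_of_le ht with ht1 | ht1
  · -- t = 1 : the integrand is identically zero
    have e : ∀ n, (∫ x, |(|μn n x| ^ (t - 1) * μn n x
              - |μn n x - μ x| ^ (t - 1) * (μn n x - μ x)
              - |μ x| ^ (t - 1) * μ x)| ^ (s / t) ∂volume) = 0 := by
      intro n
      have hz : ∀ x, |μn n x| ^ (t - 1) * μn n x
              - |μn n x - μ x| ^ (t - 1) * (μn n x - μ x)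
              - |μ x| ^ (t - 1) * μ x = 0 := by
        intro x
        rw [← ht1]
        norm_num
      have : ∀ x : EuclideanSpace ℝ (Fin N), |(|μn n x| ^ (t - 1) * μn n x
              - |μn n x - μ x| ^ (t - 1) * (μn n x - μ x)
              - |μ x| ^ (t - 1) * μ x)| ^ (s / t) = 0 := by
        intro x
        rw [hz x, abs_zero, Real.zero_rpow]
        positivity
      simp [this]
    simp only [e]
    exact tendsto_const_nhds
  -- main case 1 < t
  have ht0 : (0:ℝ) < t := by linarith
  have hst : 0 < s / t := by positivity
  obtain ⟨M, hM⟩ := hbdd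
  have hphirw : ∀ y : ℝ, |y| ^ (t - 1) * y = BLphi t y := fun y => rfl
  simp only [hphirw]
  have hphic := BL_continuous_phi t ht1
  -- measurability helpers
  have hmeas_abs : ∀ (p : ℝ), 0 ≤ p → ∀ (f : EuclideanSpace ℝ (Fin N) → ℝ), Measurable f →
      Measurable (fun x => |f x| ^ p) := fun p hp f hf =>
    (BL_continuous_abs_rpow p hp).measurable.comp hf
  have hfn_meas : ∀ n, Measurable (fun x =>
      BLphi t (μn n x) - BLphi t (μn n x - μ x) - BLphi t (μ x)) := fun n =>
    (((hphic.measurable.comp (hmeas n)).sub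
      (hphic.measurable.comp ((hmeas n).sub hμ))).sub (hphic.measurable.comp hμ))
  have hgn_meas : ∀ n, Measurable (fun x =>
      |BLphi t (μn n x) - BLphi t (μn n x - μ x) - BLphi t (μ x)| ^ (s / t)) := fun n =>
    (BL_continuous_abs_rpow (s / t) hst.le).measurable.comp (hfn_meas n)
  -- L^s bound for μ via Fatou
  have hμLs : ∫⁻ x, ENNReal.ofReal (|μ x| ^ s) ∂volume ≤ M := by
    have hconv : ∀ᵐ x ∂(volume : Measure (EuclideanSpace ℝ (Fin N))),
        ENNReal.ofReal (|μ x| ^ s)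
          = liminf (fun n => ENNReal.ofReal (|μn n x| ^ s)) atTop := by
      filter_upwards [hae] with x hx
      have h1 : Tendsto (fun n => |μn n x| ^ s) atTop (𝓝 (|μ x| ^ s)) :=
        ((BL_continuous_abs_rpow s hs0.le).tendsto _).comp hx
      exact ((ENNReal.continuous_ofReal.tendsto _).comp h1).liminf_eq.symm
    calc ∫⁻ x, ENNReal.ofReal (|μ x| ^ s) ∂volume
        = ∫⁻ x, liminf (fun n => ENNReal.ofReal (|μn n x| ^ s)) atTop ∂volume :=
          lintegral_congr_ae hconv
      _ ≤ liminf (fun n => ∫⁻ x, ENNReal.ofReal (|μn n x| ^ s) ∂volume) atTop :=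
          lintegral_liminf_le (fun n =>
            (hmeas_abs s hs0.le _ (hmeas n)).ennreal_ofReal)
      _ ≤ liminf (fun _ : ℕ => (M : ℝ≥0∞)) atTop :=
          Filter.liminf_le_liminf (Eventually.of_forall hM)
      _ = M := liminf_const _
  -- L^s bound for μn - μ
  set K : ℝ≥0∞ := ENNReal.ofReal (2 ^ s) * ((M : ℝ≥0∞) + M) with hKdef
  have hKne : K ≠ ⊤ := by
    rw [hKdef]
    exact ENNReal.mul_ne_top ENNReal.ofReal_ne_top (by simp)
  have han_bound : ∀ n, ∫⁻ x, ENNReal.ofReal (|μn n x - μ x| ^ s) ∂volume ≤ K := by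
    intro n
    have hptw : ∀ x, |μn n x - μ x| ^ s ≤ 2 ^ s * (|μn n x| ^ s + |μ x| ^ s) := by
      intro x
      calc |μn n x - μ x| ^ s ≤ (|μn n x| + |μ x|) ^ s :=
            Real.rpow_le_rpow (abs_nonneg _) (abs_sub _ _) hs0.le
        _ ≤ 2 ^ s * (|μn n x| ^ s + |μ x| ^ s) :=
            BL_rpow_add_le s _ _ hs0.le (abs_nonneg _) (abs_nonneg _)
    calc ∫⁻ x, ENNReal.ofReal (|μn n x - μ x| ^ s) ∂volume
        ≤ ∫⁻ x, ENNReal.ofReal (2 ^ s)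
            * (ENNReal.ofReal (|μn n x| ^ s) + ENNReal.ofReal (|μ x| ^ s)) ∂volume := by
          apply lintegral_mono
          intro x
          dsimp only
          rw [← ENNReal.ofReal_add (by positivity) (by positivity),
            ← ENNReal.ofReal_mul (by positivity)]
          exact ENNReal.ofReal_le_ofReal (hptw x)
      _ = ENNReal.ofReal (2 ^ s) * (∫⁻ x, ENNReal.ofReal (|μn n x| ^ s) ∂volume
            + ∫⁻ x, ENNReal.ofReal (|μ x| ^ s) ∂volume) := by
          rw [lintegral_const_mul' _ _ ENNReal.ofReal_ne_top,
            lintegral_add_left ((hmeas_abs s hs0.le _ (hmeas n)).ennreal_ofReal)]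
      _ ≤ K := by
          rw [hKdef]
          exact mul_le_mul_right (add_le_add (hM n) hμLs) _
  -- integrability
  have hint_of : ∀ (f : EuclideanSpace ℝ (Fin N) → ℝ), Measurable f → (∀ x, 0 ≤ f x) →
      (∫⁻ x, ENNReal.ofReal (f x) ∂volume) < ⊤ → Integrable f volume := by
    intro f hf h0 hfin
    refine ⟨hf.aestronglyMeasurable, ?_⟩
    rw [hasFiniteIntegral_iff_ofReal (ae_of_all _ h0)]
    exact hfin
  have hμs_int : Integrable (fun x => |μ x| ^ s) volume :=
    hint_of _ (hmeas_abs s hs0.le _ hμ) (fun x => by positivity)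
      (lt_of_le_of_lt hμLs ENNReal.coe_lt_top)
  have han_int : ∀ n, Integrable (fun x => |μn n x - μ x| ^ s) volume := fun n =>
    hint_of _ (hmeas_abs s hs0.le _ ((hmeas n).sub hμ)) (fun x => by positivity)
      (lt_of_le_of_lt (han_bound n) (lt_top_iff_ne_top.2 hKne))
  have han_ival : ∀ n, ∫ x, |μn n x - μ x| ^ s ∂volume ≤ K.toReal := by
    intro n
    rw [integral_eq_lintegral_of_nonneg_ae (ae_of_all _ (fun x => by positivity))
      (hmeas_abs s hs0.le (fun x => μn n x - μ x) ((hmeas n).sub hμ)).aestronglyMeasurable]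
    exact ENNReal.toReal_mono hKne (han_bound n)
  -- the ε'-argument
  rw [NormedAddCommGroup.tendsto_nhds_zero]
  intro ε' hε'
  set R : ℝ := K.toReal with hRdef
  have hR0 : 0 ≤ R := ENNReal.toReal_nonneg
  set P : ℝ := 2 ^ (s / t) with hPdef
  have hP : 0 < P := by positivity
  set ε : ℝ := (ε' / (2 * (P * (R + 1)))) ^ (t / s) with hεdef
  have hbase : 0 < ε' / (2 * (P * (R + 1))) := by positivity
  have hε : 0 < ε := Real.rpow_pos_of_pos hbase _
  have hεst : ε ^ (s / t) = ε' / (2 * (P * (R + 1))) := by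
    rw [hεdef, ← Real.rpow_mul hbase.le]
    have : t / s * (s / t) = 1 := by field_simp
    rw [this, Real.rpow_one]
  obtain ⟨C, hC0, hC⟩ := BL_key_ptwise t ε ht1 hε
  set D : ℝ := P * ε ^ (s / t) with hDdef
  set E : ℝ := P * C ^ (s / t) with hEdef
  have hD0 : 0 ≤ D := by positivity
  have hE0 : 0 ≤ E := by positivity
  have hDK : D * R < ε' / 2 := by
    have hDeq : D = ε' / (2 * (R + 1)) := by
      rw [hDdef, hεst]
      field_simp
    rw [hDeq, div_mul_eq_mul_div, div_lt_div_iff₀ (by positivity) (by norm_num : (0:ℝ) < 2)]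
    nlinarith
  -- pointwise bound
  have hgn_le : ∀ n x, |BLphi t (μn n x) - BLphi t (μn n x - μ x) - BLphi t (μ x)| ^ (s / t)
      ≤ D * |μn n x - μ x| ^ s + E * |μ x| ^ s := by
    intro n x
    have h0 := hC (μn n x - μ x) (μ x)
    rw [sub_add_cancel] at h0
    have e1 : (|μn n x - μ x| ^ t) ^ (s / t) = |μn n x - μ x| ^ s := by
      rw [← Real.rpow_mul (abs_nonneg _)]
      congr 1
      field_simp
    have e2 : (|μ x| ^ t) ^ (s / t) = |μ x| ^ s := by
      rw [← Real.rpow_mul (abs_nonneg _)]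
      congr 1
      field_simp
    calc |BLphi t (μn n x) - BLphi t (μn n x - μ x) - BLphi t (μ x)| ^ (s / t)
        ≤ (ε * |μn n x - μ x| ^ t + C * |μ x| ^ t) ^ (s / t) :=
          Real.rpow_le_rpow (abs_nonneg _) h0 hst.le
      _ ≤ 2 ^ (s / t) * ((ε * |μn n x - μ x| ^ t) ^ (s / t)
            + (C * |μ x| ^ t) ^ (s / t)) :=
          BL_rpow_add_le (s / t) _ _ hst.le (by positivity) (by positivity)
      _ = D * |μn n x - μ x| ^ s + E * |μ x| ^ s := by
          rw [Real.mul_rpow hε.le (by positivity), Real.mul_rpow hC0 (by positivity),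
            e1, e2, hDdef, hEdef, hPdef]
          ring
  -- the W_n and dominated convergence
  set W : ℕ → EuclideanSpace ℝ (Fin N) → ℝ := fun n x =>
    max (|BLphi t (μn n x) - BLphi t (μn n x - μ x) - BLphi t (μ x)| ^ (s / t)
      - D * |μn n x - μ x| ^ s) 0 with hWdef
  have hW_meas : ∀ n, Measurable (W n) := fun n =>
    ((hgn_meas n).sub ((hmeas_abs s hs0.le _ ((hmeas n).sub hμ)).const_mul D)).max
      measurable_const
  have hW_nonneg : ∀ n x, 0 ≤ W n x := fun n x => le_max_right _ _
  have hW_le : ∀ n x, W n x ≤ E * |μ x| ^ s := by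
    intro n x
    apply max_le _ (by positivity)
    have := hgn_le n x
    linarith
  have hW_bound : ∀ n, ∀ᵐ x ∂(volume : Measure (EuclideanSpace ℝ (Fin N))),
      ‖W n x‖ ≤ E * |μ x| ^ s := fun n =>
    ae_of_all _ (fun x => by
      rw [Real.norm_eq_abs, abs_of_nonneg (hW_nonneg n x)]
      exact hW_le n x)
  have hW_tendsto : ∀ᵐ x ∂(volume : Measure (EuclideanSpace ℝ (Fin N))),
      Tendsto (fun n => W n x) atTop (𝓝 0) := by
    filter_upwards [hae] with x hx
    have hxsub : Tendsto (fun n => μn n x - μ x) atTop (𝓝 0) := by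
      have := hx.sub_const (μ x)
      rwa [sub_self] at this
    have h1 : Tendsto (fun n => BLphi t (μn n x) - BLphi t (μn n x - μ x)
        - BLphi t (μ x)) atTop (𝓝 0) := by
      have l1 := (hphic.tendsto _).comp hx
      have l2 := (hphic.tendsto _).comp hxsub
      have l3 := (l1.sub l2).sub (tendsto_const_nhds (x := BLphi t (μ x)))
      rw [BL_phi_zero] at l2 l3
      simpa using l3
    have h2 : Tendsto (fun n =>
        |BLphi t (μn n x) - BLphi t (μn n x - μ x) - BLphi t (μ x)| ^ (s / t))
        atTop (𝓝 0) := by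
      have := ((BL_continuous_abs_rpow (s / t) hst.le).tendsto 0).comp h1
      simpa [Real.zero_rpow hst.ne', Function.comp_def] using this
    have h3 : Tendsto (fun n => |μn n x - μ x| ^ s) atTop (𝓝 0) := by
      have := ((BL_continuous_abs_rpow s hs0.le).tendsto 0).comp hxsub
      simpa [Real.zero_rpow hs0.ne', Function.comp_def] using this
    have h4 := (h2.sub (h3.const_mul D)).max
      (tendsto_const_nhds (x := (0:ℝ)))
    simpa using h4
  have hW_int : ∀ n, Integrable (W n) volume := fun n =>
    Integrable.mono' (hμs_int.const_mul E) (hW_meas n).aestronglyMeasurable (hW_bound n)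
  have hWlim : Tendsto (fun n => ∫ x, W n x ∂volume) atTop (𝓝 0) := by
    have h := tendsto_integral_of_dominated_convergence
      (F := W) (f := fun _ => (0:ℝ)) (bound := fun x => E * |μ x| ^ s)
      (fun n => (hW_meas n).aestronglyMeasurable) (hμs_int.const_mul E)
      hW_bound hW_tendsto
    simpa using h
  -- integrability of the full integrand
  have hgn_int : ∀ n, Integrable (fun x =>
      |BLphi t (μn n x) - BLphi t (μn n x - μ x) - BLphi t (μ x)| ^ (s / t)) volume := by
    intro n
    refine Integrable.mono' (((han_int n).const_mul D).add (hμs_int.const_mul E))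
      (hgn_meas n).aestronglyMeasurable (ae_of_all _ (fun x => ?_))
    rw [Real.norm_eq_abs, abs_of_nonneg (by positivity)]
    exact hgn_le n x
  -- final estimate
  have hfinal : ∀ n, ∫ x, |BLphi t (μn n x) - BLphi t (μn n x - μ x)
      - BLphi t (μ x)| ^ (s / t) ∂volume ≤ (∫ x, W n x ∂volume) + D * R := by
    intro n
    have step1 : ∫ x, |BLphi t (μn n x) - BLphi t (μn n x - μ x)
        - BLphi t (μ x)| ^ (s / t) ∂volume
        ≤ ∫ x, (W n x + D * |μn n x - μ x| ^ s) ∂volume := by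
      apply integral_mono (hgn_int n) ((hW_int n).add ((han_int n).const_mul D))
      intro x
      have h1 : |BLphi t (μn n x) - BLphi t (μn n x - μ x) - BLphi t (μ x)| ^ (s / t)
          - D * |μn n x - μ x| ^ s ≤ W n x := le_max_left _ _
      simp only [Pi.add_apply]
      linarith
    have step2 : ∫ x, (W n x + D * |μn n x - μ x| ^ s) ∂volume
        = (∫ x, W n x ∂volume) + D * ∫ x, |μn n x - μ x| ^ s ∂volume := by
      rw [integral_add (hW_int n) ((han_int n).const_mul D), integral_const_mul]
    have step3 : D * ∫ x, |μn n x - μ x| ^ s ∂volume ≤ D * R :=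
      mul_le_mul_of_nonneg_left (han_ival n) hD0
    linarith
  have hWsmall : ∀ᶠ n in atTop, ∫ x, W n x ∂volume < ε' / 2 :=
    hWlim.eventually_lt_const (by linarith)
  filter_upwards [hWsmall] with n hn
  rw [Real.norm_eq_abs, abs_of_nonneg (integral_nonneg (fun x => by positivity))]
  calc ∫ x, |BLphi t (μn n x) - BLphi t (μn n x - μ x) - BLphi t (μ x)| ^ (s / t) ∂volume
      ≤ (∫ x, W n x ∂volume) + D * R := hfinal n
    _ < ε' / 2 + ε' / 2 := add_lt_add hn hDK
    _ = ε' := by ring
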